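/- With notation as in the closability setting: for B ∈ A₀ define Ω₀^B(X,Y) := Ω₀(XB, YB). If Ω₀ is closable and right multiplication by B is τ-continuous, then Ω₀^B is closable for every B ∈ A₀. Conversely, if Ω₀^B is closable for all B ∈ A₀ and A₀ has a unit, then Ω₀ is closable. -/

import Mathlib

open Filter
open scoped ENNReal NNReal

/-- Closability of a sesquilinear form on a subset A₀ of a topological ring A:
every net in A₀ converging to 0 in the topology of A and Ω-Cauchy has
Ω(X_α, X_α) → 0. -/
def FormClosable {A : Type*} [Ring A] [TopologicalSpace A]
    (A₀ : Set A) (Ω : A → A → ℂ) : Prop :=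
  ∀ (ι : Type) (_ : Nonempty ι) (_ : SemilatticeSup ι) (X : ι → A),
    (∀ i, X i ∈ A₀) →
    Tendsto X atTop (nhds 0) →
    (∀ ε : ℝ, 0 < ε → ∃ i₀ : ι, ∀ i ≥ i₀, ∀ j ≥ i₀,
      ‖Ω (X i - X j) (X i - X j)‖ < ε) →
    Tendsto (fun i => Ω (X i) (X i)) atTop (nhds 0)

/-- with right multiplications continuous, if Ω₀ is closable then
each Ω₀^B(X,Y) := Ω₀(XB, YB), B ∈ A₀, is closable; conversely if all Ω₀^B are
closable (A₀ unital), then Ω₀ is closable. -/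
theorem stmt_16 {A : Type*} [Ring A] [Algebra ℂ A] [StarRing A] [StarModule ℂ A]
    [TopologicalSpace A] [IsTopologicalRing A] [ContinuousStar A]
    (A₀ : StarSubalgebra ℂ A) (hdense : Dense (A₀ : Set A))
    (Ω₀ : A → A → ℂ)
    (hadd₁ : ∀ x y z, Ω₀ (x + y) z = Ω₀ x z + Ω₀ y z)
    (hadd₂ : ∀ x y z, Ω₀ x (y + z) = Ω₀ x y + Ω₀ x z)
    (hsmul₁ : ∀ (c : ℂ) x y, Ω₀ (c • x) y = c * Ω₀ x y)
    (hsmul₂ : ∀ (c : ℂ) x y, Ω₀ x (c • y) = (starRingEnd ℂ) c * Ω₀ x y)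
    (hpos : ∀ x ∈ A₀, 0 ≤ (Ω₀ x x).re)
    (hmul : ∀ B : A, Continuous fun x : A => x * B) :
    (FormClosable (A₀ : Set A) Ω₀ →
      ∀ B ∈ A₀, FormClosable (A₀ : Set A) (fun X Y => Ω₀ (X * B) (Y * B))) ∧
    ((∀ B ∈ A₀, FormClosable (A₀ : Set A) (fun X Y => Ω₀ (X * B) (Y * B))) →
      FormClosable (A₀ : Set A) Ω₀) := by
  constructor
  · intro hΩ B hB ι hne hsl X hmem htend hcauchy
    have h1 : ∀ i, X i * B ∈ A₀ := fun i => mul_mem (hmem i) hB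
    have h2 : Tendsto (fun i => X i * B) atTop (nhds 0) := by
      have := (hmul B).tendsto 0
      rw [zero_mul] at this
      exact this.comp htend
    have h3 : ∀ ε : ℝ, 0 < ε → ∃ i₀ : ι, ∀ i ≥ i₀, ∀ j ≥ i₀,
        ‖Ω₀ (X i * B - X j * B) (X i * B - X j * B)‖ < ε := by
      intro ε hε
      obtain ⟨i₀, h⟩ := hcauchy ε hε
      exact ⟨i₀, fun i hi j hj => by
        simpa [sub_mul] using h i hi j hj⟩
    exact hΩ ι hne hsl (fun i => X i * B) h1 h2 h3
  · intro h ι hne hsl X hmem htend hcauchy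
    have := h 1 (one_mem A₀) ι hne hsl X hmem htend (by simpa using hcauchy)
    simpa using this
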